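/- For all α, β ∈ A_h, D₂(α, β) := (βx − xβ) + (ŷα − αŷ) − F_α(h) lies in gcd(h, h')(x)·A_h. -/

import Mathlib

open Polynomial TensorProduct
open scoped Classical

noncomputable section

/-- The single defining relation `Y·X = X·Y + 1` of the Weyl algebra. -/
inductive WeylRel (F : Type) [Field F] :
    FreeAlgebra F (Fin 2) → FreeAlgebra F (Fin 2) → Prop
  | rel : WeylRel F (FreeAlgebra.ι F (1 : Fin 2) * FreeAlgebra.ι F (0 : Fin 2))
      (FreeAlgebra.ι F (0 : Fin 2) * FreeAlgebra.ι F (1 : Fin 2) + 1)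

/-- The first Weyl algebra `A₁` over `F`. -/
abbrev Weyl (F : Type) [Field F] : Type := RingQuot (WeylRel F)

variable (F : Type) [Field F]

/-- The image `x` of the generator `X` in the Weyl algebra. -/
def wx : Weyl F := RingQuot.mkAlgHom F (WeylRel F) (FreeAlgebra.ι F (0 : Fin 2))

/-- The image `y` of the generator `Y` in the Weyl algebra. -/
def wy : Weyl F := RingQuot.mkAlgHom F (WeylRel F) (FreeAlgebra.ι F (1 : Fin 2))

/-- The subalgebra `A_h ⊆ A₁` generated by `x` and `ŷ = y·h(x)`. -/
def Ah (h : F[X]) : Subalgebra F (Weyl F) :=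
  Algebra.adjoin F {wx F, wy F * aeval (wx F) h}

/-- The monic greatest common divisor of two polynomials over a field. -/
def mgcd (f g : F[X]) : F[X] := normalize (EuclideanDomain.gcd f g)

theorem weyl_rel : wy F * wx F = wx F * wy F + 1 := by
  have := RingQuot.mkAlgHom_rel F (WeylRel.rel (F := F))
  simpa [wx, wy, map_add, map_mul, map_one] using this

theorem wx_comm (p : F[X]) : aeval (wx F) p * wx F = wx F * aeval (wx F) p := by
  induction p using Polynomial.induction_on with
  | C a => simp [Algebra.commutes]
  | add p q hp hq => simp only [map_add, add_mul, mul_add, hp, hq]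
  | monomial n a hp =>
      have e1 : C a * X ^ (n + 1) = C a * X ^ n * X := by ring
      rw [e1, map_mul, aeval_X]
      conv_rhs => rw [← mul_assoc, ← hp]

theorem wy_comm (p : F[X]) :
    wy F * aeval (wx F) p = aeval (wx F) p * wy F + aeval (wx F) (derivative p) := by
  induction p using Polynomial.induction_on with
  | C a => simp [Algebra.commutes]
  | add p q hp hq =>
      simp only [map_add, mul_add, add_mul] at *
      rw [hp, hq]
      abel
  | monomial n a hp =>
      have e1 : C a * X ^ (n + 1) = C a * X ^ n * X := by ring
      have e2 : derivative (C a * X ^ n * X) = derivative (C a * X ^ n) * X + C a * X ^ n := by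
        rw [derivative_mul, derivative_X, mul_one]
      have key : aeval (wx F) (C a * X ^ n * X) = aeval (wx F) (C a * X ^ n) * wx F := by
        rw [map_mul, aeval_X]
      have key2 : aeval (wx F) (derivative (C a * X ^ n * X)) =
          aeval (wx F) (derivative (C a * X ^ n)) * wx F + aeval (wx F) (C a * X ^ n) := by
        rw [e2, map_add, map_mul, aeval_X]
      rw [e1, key, key2, ← mul_assoc, hp, add_mul, mul_assoc, weyl_rel, mul_add, mul_one,
        ← mul_assoc]
      abel

def yh (h : F[X]) : Weyl F := wy F * aeval (wx F) h

variable (h : F[X])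

theorem yhat_comm (p : F[X]) :
    yh F h * aeval (wx F) p = aeval (wx F) p * yh F h + aeval (wx F) (derivative p * h) := by
  unfold yh
  calc wy F * aeval (wx F) h * aeval (wx F) p
      = wy F * aeval (wx F) p * aeval (wx F) h := by
        rw [mul_assoc, ← map_mul, mul_comm h p, map_mul, ← mul_assoc]
    _ = aeval (wx F) p * (wy F * aeval (wx F) h) + aeval (wx F) (derivative p * h) := by
        rw [wy_comm, add_mul, map_mul, mul_assoc]

theorem wx_mem : wx F ∈ Ah F h := Algebra.subset_adjoin (by simp)

theorem yh_mem : yh F h ∈ Ah F h := Algebra.subset_adjoin (by simp [yh])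

theorem aeval_mem (p : F[X]) : aeval (wx F) p ∈ Ah F h := by
  have h1 : Algebra.adjoin F {wx F} ≤ Ah F h :=
    Algebra.adjoin_mono (by simp [Set.singleton_subset_iff])
  exact h1 (Polynomial.aeval_mem_adjoin_singleton F (wx F))

theorem g_dvd_h : mgcd F h (derivative h) ∣ h := by
  unfold mgcd
  exact normalize_dvd_iff.mpr (EuclideanDomain.gcd_dvd_left _ _)

theorem g_dvd_h' : mgcd F h (derivative h) ∣ derivative h := by
  unfold mgcd
  exact normalize_dvd_iff.mpr (EuclideanDomain.gcd_dvd_right _ _)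

def InI (w : Weyl F) : Prop :=
  ∃ c ∈ Ah F h, w = aeval (wx F) (mgcd F h (derivative h)) * c

theorem InI_zero : InI F h 0 := ⟨0, zero_mem _, by simp⟩

theorem InI_add {a b : Weyl F} (ha : InI F h a) (hb : InI F h b) : InI F h (a + b) := by
  obtain ⟨c, hc, rfl⟩ := ha; obtain ⟨d, hd, rfl⟩ := hb
  exact ⟨c + d, add_mem hc hd, by rw [mul_add]⟩

theorem InI_neg {a : Weyl F} (ha : InI F h a) : InI F h (-a) := by
  obtain ⟨c, hc, rfl⟩ := ha
  refine ⟨-c, neg_mem hc, ?_⟩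
  exact (mul_neg (aeval (wx F) (mgcd F h (derivative h))) c).symm

theorem InI_sub {a b : Weyl F} (ha : InI F h a) (hb : InI F h b) : InI F h (a - b) := by
  rw [sub_eq_add_neg]; exact InI_add F h ha (InI_neg F h hb)

theorem InI_smul {a : Weyl F} (r : F) (ha : InI F h a) : InI F h (r • a) := by
  obtain ⟨c, hc, rfl⟩ := ha
  exact ⟨r • c, SMulMemClass.smul_mem r hc, by rw [mul_smul_comm]⟩

theorem InI_sum {ι : Type} (s : Finset ι) (f : ι → Weyl F)
    (hf : ∀ i ∈ s, InI F h (f i)) : InI F h (∑ i ∈ s, f i) := by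
  classical
  induction s using Finset.induction_on with
  | empty => simpa using InI_zero F h
  | insert _ _ hnot ih =>
      rw [Finset.sum_insert hnot]
      exact InI_add F h (hf _ (Finset.mem_insert_self _ _))
        (ih fun i hi => hf i (Finset.mem_insert_of_mem hi))

theorem InI_aeval_of_dvd {p : F[X]} (hp : mgcd F h (derivative h) ∣ p) :
    InI F h (aeval (wx F) p) := by
  obtain ⟨k, rfl⟩ := hp
  exact ⟨aeval (wx F) k, aeval_mem F h k, by rw [map_mul]⟩

theorem InI_aeval_h : InI F h (aeval (wx F) h) := InI_aeval_of_dvd F h (g_dvd_h F h)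

theorem yh_swap : ∃ q : F[X],
    yh F h * aeval (wx F) (mgcd F h (derivative h))
      = aeval (wx F) (mgcd F h (derivative h)) * (yh F h + aeval (wx F) q) := by
  obtain ⟨k, hk⟩ := g_dvd_h F h
  refine ⟨derivative (mgcd F h (derivative h)) * k, ?_⟩
  rw [yhat_comm, mul_add, ← map_mul]
  congr 2
  generalize mgcd F h (derivative h) = g at hk ⊢
  rw [hk]; ring

theorem swap {a : Weyl F} (ha : a ∈ Ah F h) :
    ∃ a' ∈ Ah F h, a * aeval (wx F) (mgcd F h (derivative h))
      = aeval (wx F) (mgcd F h (derivative h)) * a' := by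
  induction ha using Algebra.adjoin_induction with
  | mem z hz =>
      rcases hz with hz | hz
      · exact ⟨wx F, wx_mem F h, by rw [hz, ← wx_comm]⟩
      · simp only [Set.mem_singleton_iff] at hz
        obtain ⟨q, hq⟩ := yh_swap F h
        exact ⟨yh F h + aeval (wx F) q, add_mem (yh_mem F h) (aeval_mem F h _), by rw [hz]; exact hq⟩
  | algebraMap r =>
      exact ⟨algebraMap F _ r, algebraMap_mem _ r,
        Algebra.commutes r (aeval (wx F) (mgcd F h (derivative h)))⟩
  | add u v hu hv ihu ihv =>
      obtain ⟨u', hu', eu⟩ := ihu; obtain ⟨v', hv', ev⟩ := ihv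
      exact ⟨u' + v', add_mem hu' hv', by rw [add_mul, eu, ev, mul_add]⟩
  | mul u v hu hv ihu ihv =>
      obtain ⟨u', hu', eu⟩ := ihu; obtain ⟨v', hv', ev⟩ := ihv
      exact ⟨u' * v', mul_mem hu' hv', by rw [mul_assoc, ev, ← mul_assoc, eu, mul_assoc]⟩

theorem InI_mul_left {a w : Weyl F} (ha : a ∈ Ah F h) (hw : InI F h w) : InI F h (a * w) := by
  obtain ⟨c, hc, rfl⟩ := hw
  obtain ⟨a', ha', ea⟩ := swap F h ha
  exact ⟨a' * c, mul_mem ha' hc, by rw [← mul_assoc, ea, mul_assoc]⟩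

theorem InI_mul_right {a w : Weyl F} (hw : InI F h w) (ha : a ∈ Ah F h) : InI F h (w * a) := by
  obtain ⟨c, hc, rfl⟩ := hw
  exact ⟨c * a, mul_mem hc ha, by rw [mul_assoc]⟩

theorem yh_x : yh F h * wx F - wx F * yh F h = aeval (wx F) h := by
  have := yhat_comm F h X
  rw [aeval_X, derivative_X, one_mul] at this
  rw [this]; abel

theorem comm_x {b : Weyl F} (hb : b ∈ Ah F h) : InI F h (b * wx F - wx F * b) := by
  induction hb using Algebra.adjoin_induction with
  | mem z hz =>
      rcases hz with hz | hz
      · rw [hz, sub_self]; exact InI_zero F h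
      · simp only [Set.mem_singleton_iff] at hz
        rw [hz]
        rw [show (wy F * aeval (wx F) h) = yh F h from rfl, yh_x]
        exact InI_aeval_h F h
  | algebraMap r =>
      rw [Algebra.commutes r (wx F), sub_self]; exact InI_zero F h
  | add u v hu hv ihu ihv =>
      have e : (u + v) * wx F - wx F * (u + v)
          = (u * wx F - wx F * u) + (v * wx F - wx F * v) := by
        simp only [mul_sub, sub_mul, mul_add, add_mul, mul_assoc]; abel
      rw [e]; exact InI_add F h ihu ihv
  | mul u v hu hv ihu ihv =>
      have e : (u * v) * wx F - wx F * (u * v)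
          = u * (v * wx F - wx F * v) + (u * wx F - wx F * u) * v := by
        simp only [mul_sub, sub_mul, mul_add, add_mul, mul_assoc]; abel
      rw [e]
      exact InI_add F h (InI_mul_left F h hu ihv) (InI_mul_right F h ihu hv)

theorem comm_poly {b : Weyl F} (hb : b ∈ Ah F h) (p : F[X]) :
    InI F h (b * aeval (wx F) p - aeval (wx F) p * b) := by
  induction p using Polynomial.induction_on with
  | C a =>
      rw [aeval_C, Algebra.commutes a b, sub_self]; exact InI_zero F h
  | add p q hp hq =>
      have e : b * aeval (wx F) (p + q) - aeval (wx F) (p + q) * b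
          = (b * aeval (wx F) p - aeval (wx F) p * b)
            + (b * aeval (wx F) q - aeval (wx F) q * b) := by
        rw [map_add]; simp only [mul_sub, sub_mul, mul_add, add_mul, mul_assoc]; abel
      rw [e]; exact InI_add F h hp hq
  | monomial n a hp =>
      have e1 : (C a * X ^ (n + 1) : F[X]) = C a * X ^ n * X := by ring
      have e2 : aeval (wx F) (C a * X ^ n * X) = aeval (wx F) (C a * X ^ n) * wx F := by
        rw [map_mul, aeval_X]
      set U := aeval (wx F) (C a * X ^ n : F[X]) with hU
      have e : b * (U * wx F) - (U * wx F) * b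
          = (b * U - U * b) * wx F + U * (b * wx F - wx F * b) := by
        simp only [mul_sub, sub_mul, mul_add, add_mul, mul_assoc]; abel
      rw [e1, e2, e]
      exact InI_add F h (InI_mul_right F h hp (wx_mem F h))
        (InI_mul_left F h (aeval_mem F h _) (comm_x F h hb))

theorem comm_yh {a : Weyl F} (ha : a ∈ Ah F h) :
    InI F h (yh F h * a - a * yh F h) := by
  induction ha using Algebra.adjoin_induction with
  | mem z hz =>
      rcases hz with hz | hz
      · rw [hz, yh_x]; exact InI_aeval_h F h
      · simp only [Set.mem_singleton_iff] at hz
        rw [hz, show (wy F * aeval (wx F) h) = yh F h from rfl, sub_self]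
        exact InI_zero F h
  | algebraMap r =>
      rw [Algebra.commutes r (yh F h), sub_self]; exact InI_zero F h
  | add u v hu hv ihu ihv =>
      have e : yh F h * (u + v) - (u + v) * yh F h
          = (yh F h * u - u * yh F h) + (yh F h * v - v * yh F h) := by
        simp only [mul_sub, sub_mul, mul_add, add_mul, mul_assoc]; abel
      rw [e]; exact InI_add F h ihu ihv
  | mul u v hu hv ihu ihv =>
      have e : yh F h * (u * v) - (u * v) * yh F h
          = (yh F h * u - u * yh F h) * v + u * (yh F h * v - v * yh F h) := by
        simp only [mul_sub, sub_mul, mul_add, add_mul, mul_assoc]; abel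
      rw [e]
      exact InI_add F h (InI_mul_right F h ihu hv) (InI_mul_left F h hu ihv)

theorem comm_pow {a : Weyl F} (ha : a ∈ Ah F h) (k : ℕ) :
    InI F h (a * wx F ^ k - wx F ^ k * a) := by
  have := comm_poly F h ha (X ^ k)
  rw [map_pow, aeval_X] at this
  exact this

theorem wx_pow_mem (k : ℕ) : wx F ^ k ∈ Ah F h := pow_mem (wx_mem F h) k

theorem term_s {α : Weyl F} (hα : α ∈ Ah F h) (s : ℕ) :
    InI F h ((∑ ℓ ∈ Finset.range s, wx F ^ ℓ * α * wx F ^ (s - 1 - ℓ))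
      - (s : F) • (wx F ^ (s - 1) * α)) := by
  have e1 : (s : F) • (wx F ^ (s - 1) * α)
      = ∑ _ℓ ∈ Finset.range s, wx F ^ (s - 1) * α := by
    rw [Finset.sum_const, Finset.card_range, Nat.cast_smul_eq_nsmul]
  rw [e1, ← Finset.sum_sub_distrib]
  refine InI_sum F h _ _ fun ℓ hℓ => ?_
  have hls : ℓ < s := Finset.mem_range.mp hℓ
  have e2 : wx F ^ ℓ * α * wx F ^ (s - 1 - ℓ) - wx F ^ (s - 1) * α
      = wx F ^ ℓ * (α * wx F ^ (s - 1 - ℓ) - wx F ^ (s - 1 - ℓ) * α) := by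
    rw [mul_sub, ← mul_assoc, ← mul_assoc, ← pow_add]
    have e3 : ℓ + (s - 1 - ℓ) = s - 1 := by omega
    rw [e3]
  rw [e2]
  exact InI_mul_left F h (wx_pow_mem F h ℓ) (comm_pow F h hα _)

theorem Fa_part {α : Weyl F} (hα : α ∈ Ah F h) (Fα : F[X] →ₗ[F] Weyl F)
    (hFα : ∀ s : ℕ, Fα (X ^ s) =
      ∑ ℓ ∈ Finset.range s, wx F ^ ℓ * α * wx F ^ (s - 1 - ℓ)) :
    InI F h (Fα h) := by
  have key : InI F h (Fα h - aeval (wx F) (derivative h) * α) := by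
    have hrep := h.as_sum_range
    have e1 : Fα h = ∑ s ∈ Finset.range (h.natDegree + 1), h.coeff s • Fα (X ^ s) := by
      conv_lhs => rw [hrep]
      rw [map_sum]
      refine Finset.sum_congr rfl fun s _ => ?_
      rw [← smul_X_eq_monomial, map_smul]
    have e2 : aeval (wx F) (derivative h) * α
        = ∑ s ∈ Finset.range (h.natDegree + 1),
            h.coeff s • ((s : F) • (wx F ^ (s - 1) * α)) := by
      conv_lhs => rw [hrep]
      rw [map_sum, map_sum, Finset.sum_mul]
      refine Finset.sum_congr rfl fun s _ => ?_
      rw [derivative_monomial, aeval_monomial, smul_smul, Algebra.smul_def, mul_assoc]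
    rw [e1, e2, ← Finset.sum_sub_distrib]
    refine InI_sum F h _ _ fun s _ => ?_
    have hterm : InI F h (Fα (X ^ s) - (s : F) • (wx F ^ (s - 1) * α)) := by
      rw [hFα s]; exact term_s F h hα s
    have := InI_smul F h (h.coeff s) hterm
    simpa [smul_sub] using this
  have : Fα h = (Fα h - aeval (wx F) (derivative h) * α)
      + aeval (wx F) (derivative h) * α := by abel
  rw [this]
  exact InI_add F h key (InI_mul_right F h (InI_aeval_of_dvd F h (g_dvd_h' F h)) hα)


/-- for all `α, β ∈ A_h`,
`D₂(α, β) = (βx − xβ) + (ŷα − αŷ) − F_α(h)` lies in `gcd(h, h')(x)·A_h`. -/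
theorem statement4 (h : F[X]) (hh : h ≠ 0) (α β : Weyl F)
    (hα : α ∈ Ah F h) (hβ : β ∈ Ah F h) (Fα : F[X] →ₗ[F] Weyl F)
    (hFα : ∀ s : ℕ, Fα (X ^ s) =
      ∑ ℓ ∈ Finset.range s, wx F ^ ℓ * α * wx F ^ (s - 1 - ℓ)) :
    ∃ c ∈ Ah F h,
      (β * wx F - wx F * β) +
        ((wy F * aeval (wx F) h) * α - α * (wy F * aeval (wx F) h)) - Fα h
      = aeval (wx F) (mgcd F h (derivative h)) * c := by
  have h1 := comm_x F h hβ
  have h2 := comm_yh F h hα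
  have h3 := Fa_part F h hα Fα hFα
  exact InI_sub F h (InI_add F h h1 h2) h3
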